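/- Let B' ⊆ V with |B'| = 1, say B' = {1}, and B = {1, m} with m ≠ 1. Write f(s) = log(1+exp(s)), K_{B'}(w,c) = f(w₁+c) − f(c) and K_B(w,c) = f(w₁+w_m+c) − f(w_m+c) − f(w₁+c) + f(c). Then for all w₁, w_m, c: either (K_{B'}(w,c) ≥ 0 and K_B(w,c) ≥ −K_{B'}(w,c)) or (K_{B'}(w,c) ≤ 0 and K_B(w,c) ≤ −K_{B'}(w,c)). -/
import Mathlib

theorem edge_pair_necessity_card_two (w₁ wₘ c : ℝ)
    (f : ℝ → ℝ) (hf : ∀ s, f s = Real.log (1 + Real.exp s))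
    (KB' KB : ℝ)
    (hKB' : KB' = f (w₁ + c) - f c)
    (hKB : KB = f (w₁ + wₘ + c) - f (wₘ + c) - f (w₁ + c) + f c) :
    (0 ≤ KB' ∧ -KB' ≤ KB) ∨ (KB' ≤ 0 ∧ KB ≤ -KB') := by
  have hmono : ∀ a b : ℝ, a ≤ b → f a ≤ f b := by
    intro a b hab
    rw [hf, hf]
    apply Real.log_le_log (by positivity)
    have := Real.exp_le_exp.mpr hab
    linarith
  rcases le_or_gt 0 w₁ with h | h
  · left
    constructor
    · have := hmono c (w₁ + c) (by linarith)
      linarith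
    · have := hmono (wₘ + c) (w₁ + wₘ + c) (by linarith)
      linarith
  · right
    constructor
    · have := hmono (w₁ + c) c (by linarith)
      linarith
    · have := hmono (w₁ + wₘ + c) (wₘ + c) (by linarith)
      linarith
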